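/- Let t be a positive integer and δ > 0. Let p be a prime, S ⊆ ℤ_p finite, m a positive integer, and define Ψ(χ) = (m/|S|^2)·Σ_{x,x'∈S} ||χx - χx'||_p^2 and B_t = {χ ∈ ℤ_p : Ψ(χ) ≤ t}, and Q_{t,δ} = {x ∈ ℤ_p : Σ_{χ∈B_t} ||χx||_p^2 < δ|B_t|}. Then for any positive integer k, the k-fold sumset kQ_{t,δ} is contained in Q_{t, k^2·δ}. -/

import Mathlib

open scoped Classical

/-- For `x ∈ ℤ_p`, the distance of `y/p` to the nearest integer, where `y` represents `x`. -/
noncomputable def pDist (p : ℕ) (x : ZMod p) : ℝ :=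
  |(x.val : ℝ) / p - round ((x.val : ℝ) / p)|

/-- `Ψ(χ) = (m/|S|²) · Σ_{x,x'∈S} ‖χx - χx'‖_p²`. -/
noncomputable def Psi (p : ℕ) (S : Finset (ZMod p)) (m : ℕ) (χ : ZMod p) : ℝ :=
  (m : ℝ) / (S.card : ℝ) ^ 2 * ∑ x ∈ S, ∑ x' ∈ S, pDist p (χ * x - χ * x') ^ 2

/-- `B_t = {χ ∈ ℤ_p : Ψ(χ) ≤ t}`. -/
noncomputable def Bt (p : ℕ) [NeZero p] (S : Finset (ZMod p)) (m : ℕ) (t : ℝ) :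
    Finset (ZMod p) :=
  Finset.univ.filter fun χ => Psi p S m χ ≤ t

/-- `Q_{t,δ} = {x ∈ ℤ_p : Σ_{χ∈B_t} ‖χx‖_p² < δ|B_t|}`. -/
noncomputable def Qt (p : ℕ) [NeZero p] (S : Finset (ZMod p)) (m : ℕ) (t δ : ℝ) :
    Finset (ZMod p) :=
  Finset.univ.filter fun x => ∑ χ ∈ Bt p S m t, pDist p (χ * x) ^ 2 < δ * (Bt p S m t).card

/-- The `k`-fold sumset `kA = {a_1 + ⋯ + a_k : a_1, …, a_k ∈ A}`. -/
noncomputable def kfoldSumset (p : ℕ) [NeZero p] (k : ℕ) (A : Finset (ZMod p)) :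
    Finset (ZMod p) :=
  (Fintype.piFinset fun _ : Fin k => A).image fun f => ∑ i, f i

/-- `d x = |x - round x|` : distance to the nearest integer. -/
noncomputable def dInt (x : ℝ) : ℝ := |x - round x|

lemma dInt_nonneg (x : ℝ) : 0 ≤ dInt x := abs_nonneg _

lemma dInt_le (x : ℝ) (n : ℤ) : dInt x ≤ |x - n| := by
  rcases eq_or_ne n (round x) with rfl | h
  · exact le_refl _
  · have h1 : (1 : ℝ) ≤ |(round x : ℝ) - n| := by
      have : round x - n ≠ 0 := sub_ne_zero.mpr (by exact_mod_cast (Ne.symm h))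
      have := Int.one_le_abs this
      calc (1:ℝ) ≤ |(round x - n : ℤ)| := by exact_mod_cast this
        _ = |(round x : ℝ) - n| := by push_cast; ring_nf
    have h2 : dInt x ≤ 1 / 2 := abs_sub_round x
    have h3 : |(round x : ℝ) - n| ≤ |x - n| + |x - round x| := by
      have := abs_sub_abs_le_abs_sub ((round x : ℝ) - n) 0
      calc |(round x : ℝ) - n| = |((round x : ℝ) - x) + (x - n)| := by ring_nf
        _ ≤ |(round x : ℝ) - x| + |x - n| := abs_add_le _ _
        _ = |x - n| + |x - round x| := by rw [abs_sub_comm]; ring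
    have : 1 - dInt x ≤ |x - n| := by
      have := h3
      simp only [dInt] at *
      linarith
    linarith

lemma dInt_add_int (x : ℝ) (n : ℤ) : dInt (x + n) = dInt x := by
  simp [dInt, round_add_intCast]

lemma dInt_subadd (x y : ℝ) : dInt (x + y) ≤ dInt x + dInt y := by
  calc dInt (x + y) ≤ |x + y - (round x + round y : ℤ)| := dInt_le _ _
    _ ≤ |x - round x| + |y - round y| := by
        push_cast
        calc |x + y - ((round x : ℝ) + round y)| = |(x - round x) + (y - round y)| := by ring_nf
          _ ≤ _ := abs_add_le _ _
    _ = dInt x + dInt y := rfl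

lemma pDist_eq (p : ℕ) (x : ZMod p) : pDist p x = dInt ((x.val : ℝ) / p) := rfl

lemma pDist_add_le (p : ℕ) [NeZero p] (a b : ZMod p) :
    pDist p (a + b) ≤ pDist p a + pDist p b := by
  have hp : (0:ℝ) < p := by exact_mod_cast Nat.pos_of_ne_zero (NeZero.ne p)
  have hval : (a + b).val = (a.val + b.val) % p := ZMod.val_add a b
  set q : ℕ := (a.val + b.val) / p with hq
  have hdiv : (a + b).val + p * q = a.val + b.val := by
    rw [hval, hq]; exact Nat.mod_add_div _ _
  have hreal : ((a + b).val : ℝ) / p = (a.val : ℝ)/p + (b.val : ℝ)/p + (-(q:ℤ) : ℤ) := by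
    have : ((a+b).val : ℝ) = (a.val : ℝ) + b.val - p * q := by
      have := congrArg (fun n : ℕ => (n : ℝ)) hdiv
      push_cast at this
      linarith
    rw [this]
    push_cast
    field_simp
    ring
  rw [pDist_eq, pDist_eq, pDist_eq, hreal, dInt_add_int]
  exact dInt_subadd _ _

lemma pDist_zero (p : ℕ) [NeZero p] : pDist p 0 = 0 := by
  simp [pDist, ZMod.val_zero]

lemma pDist_sum_le (p : ℕ) [NeZero p] {ι : Type*} (s : Finset ι) (g : ι → ZMod p) :
    pDist p (∑ i ∈ s, g i) ≤ ∑ i ∈ s, pDist p (g i) :=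
  Finset.le_sum_of_subadditive (pDist p) (pDist_zero p).le (pDist_add_le p) s g

theorem stmt8 (p : ℕ) [Fact p.Prime] (S : Finset (ZMod p)) (m : ℕ) (hm : 0 < m)
    (t : ℕ) (ht : 0 < t) (δ : ℝ) (hδ : 0 < δ) (k : ℕ) (hk : 0 < k) :
    kfoldSumset p k (Qt p S m t δ) ⊆ Qt p S m t ((k : ℝ) ^ 2 * δ) := by
  intro x hx
  simp only [kfoldSumset, Finset.mem_image, Fintype.mem_piFinset] at hx
  obtain ⟨f, hf, rfl⟩ := hx
  have hfQ : ∀ i, ∑ χ ∈ Bt p S m t, pDist p (χ * f i) ^ 2 < δ * (Bt p S m t).card := by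
    intro i
    have := hf i
    simp only [Qt, Finset.mem_filter] at this
    exact this.2
  simp only [Qt, Finset.mem_filter, Finset.mem_univ, true_and]
  set B := Bt p S m t
  have key : ∀ χ ∈ B, pDist p (χ * ∑ i, f i) ^ 2 ≤ (k : ℝ) * ∑ i, pDist p (χ * f i) ^ 2 := by
    intro χ _
    have h1 : pDist p (χ * ∑ i, f i) ≤ ∑ i, pDist p (χ * f i) := by
      rw [Finset.mul_sum]
      exact pDist_sum_le p _ _
    have h2 : pDist p (χ * ∑ i, f i) ^ 2 ≤ (∑ i, pDist p (χ * f i)) ^ 2 := by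
      apply pow_le_pow_left₀ (by exact abs_nonneg _) h1
    have h3 : (∑ i, pDist p (χ * f i)) ^ 2 ≤
        (Finset.univ : Finset (Fin k)).card * ∑ i, pDist p (χ * f i) ^ 2 :=
      sq_sum_le_card_mul_sum_sq
    simpa [Finset.card_univ] using h2.trans h3
  calc ∑ χ ∈ B, pDist p (χ * ∑ i, f i) ^ 2
      ≤ ∑ χ ∈ B, (k : ℝ) * ∑ i, pDist p (χ * f i) ^ 2 := Finset.sum_le_sum key
    _ = (k : ℝ) * ∑ i : Fin k, ∑ χ ∈ B, pDist p (χ * f i) ^ 2 := by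
        rw [← Finset.mul_sum, Finset.sum_comm]
    _ < (k : ℝ) * ∑ i : Fin k, δ * B.card := by
        apply mul_lt_mul_of_pos_left _ (by exact_mod_cast hk)
        apply Finset.sum_lt_sum_of_nonempty
        · exact Finset.univ_nonempty_iff.mpr ⟨⟨0, hk⟩⟩
        · intro i _; exact hfQ i
    _ = (k : ℝ) ^ 2 * δ * B.card := by
        rw [Finset.sum_const, Finset.card_univ, Fintype.card_fin]
        push_cast; ring
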